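/- Removing a vertex from a minimal d-separating set opens a path through it: if S minimally d-separates X and Y in a DAG, then for every Z ∈ S there exists a path between X and Y that is active given S \ {Z} and passes through Z. -/

import Mathlib

variable {V : Type*}

/-- A directed graph (edge relation) is acyclic if no vertex reaches itself by a
nonempty directed path. -/
def Acyclic (E : V → V → Prop) : Prop := ∀ v, ¬ Relation.TransGen E v v

/-- A path in the underlying undirected graph of `E`, from `X` to `Y`:
a list of distinct vertices starting at `X`, ending at `Y`, with consecutive vertices
joined by an edge of `E` in one of the two directions. -/
def IsUPath (E : V → V → Prop) (X Y : V) (p : List V) : Prop :=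
  p.Nodup ∧ p.head? = some X ∧ p.getLast? = some Y ∧ p.Chain' (fun a b => E a b ∨ E b a)

/-- `v` is a collider on the consecutive triple `⟨u, v, w⟩`: both incident path edges
point into `v`. -/
def Collider (E : V → V → Prop) (u v w : V) : Prop := E u v ∧ E w v

/-- A path is active (d-connecting) given `Z`: every collider on it is an ancestor of
some member of `Z` and every non-collider on it is outside `Z`. -/
def Active (E : V → V → Prop) (Z : Set V) (p : List V) : Prop :=
  ∀ u v w : V, [u, v, w] <:+: p →
    (Collider E u v w → ∃ z ∈ Z, Relation.ReflTransGen E v z) ∧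
    (¬ Collider E u v w → v ∉ Z)

/-- `Z` d-separates `X` and `Y`: no path between them is active given `Z`. -/
def DSep (E : V → V → Prop) (Z : Set V) (X Y : V) : Prop :=
  ∀ p : List V, IsUPath E X Y p → ¬ Active E Z p

/-- Removing a vertex from a minimal d-separating set opens a path through it: for every
`Z ∈ S` there is a path between `X` and `Y`, active given `S \ {Z}`, on which `Z` lies
as a non-collider. -/

lemma append_cons_nodup_eq {α : Type*} {a b a' b' : List α} {v : α}
    (h : (a ++ v :: b).Nodup) (e : a ++ v :: b = a' ++ v :: b') : a = a' ∧ b = b' := by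
  classical
  have hva : v ∉ a := fun hv =>
    (List.disjoint_of_nodup_append h) hv (List.mem_cons_self (a := v) (l := b))
  have hva' : v ∉ a' := fun hv =>
    (List.disjoint_of_nodup_append (e ▸ h)) hv (List.mem_cons_self (a := v) (l := b'))
  have hlen : a.length = a'.length := by
    have h1 : List.idxOf v (a ++ v :: b) = a.length := by
      rw [List.idxOf_append_of_notMem hva]; simp
    have h2 : List.idxOf v (a' ++ v :: b') = a'.length := by
      rw [List.idxOf_append_of_notMem hva']; simp
    rw [← h1, ← h2, e]
  obtain ⟨h1, h2⟩ := List.append_inj e hlen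
  exact ⟨h1, by simpa using h2⟩

lemma infix_triple_unique {α : Type*} {l : List α} (h : l.Nodup) {u v w u' w' : α}
    (h1 : [u, v, w] <:+: l) (h2 : [u', v, w'] <:+: l) : u = u' ∧ w = w' := by
  obtain ⟨s, t, e1⟩ := h1
  obtain ⟨s', t', e2⟩ := h2
  have e : (s ++ [u]) ++ v :: (w :: t) = (s' ++ [u']) ++ v :: (w' :: t') := by
    rw [← e2] at e1; simpa [List.append_assoc] using e1
  have hn : ((s ++ [u]) ++ v :: (w :: t)).Nodup := by
    have : l = (s ++ [u]) ++ v :: (w :: t) := by rw [← e1]; simp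
    rwa [← this]
  obtain ⟨ha, hb⟩ := append_cons_nodup_eq hn e
  have hu : u = u' := by
    have := congrArg List.getLast? ha
    simpa using this
  exact ⟨hu, by simpa using congrArg List.head? hb⟩

theorem minimal_dsep_open_path [Fintype V] (E : V → V → Prop) (hacy : Acyclic E)
    (X Y : V) (S : Set V) (hS : DSep E S X Y) (hmin : ∀ T ⊂ S, ¬ DSep E T X Y) :
    ∀ Z ∈ S, ∃ p : List V, IsUPath E X Y p ∧ Active E (S \ {Z}) p ∧ Z ∈ p ∧
      ∀ u w : V, [u, Z, w] <:+: p → ¬ Collider E u Z w := by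
  intro Z hZ
  have hsub : S \ {Z} ⊂ S := by
    constructor
    · exact Set.diff_subset
    · intro hle
      exact (hle hZ).2 rfl
  have hnd := hmin _ hsub
  rw [DSep] at hnd
  push_neg at hnd
  obtain ⟨p, hp, hact⟩ := hnd
  -- there is a non-collider triple at Z
  have hkey : ∃ u w : V, [u, Z, w] <:+: p ∧ ¬ Collider E u Z w := by
    by_contra hcon
    push_neg at hcon
    apply hS p hp
    intro u v w hinf
    obtain ⟨hc, hnc⟩ := hact u v w hinf
    constructor
    · intro hcol
      obtain ⟨z, hz, hr⟩ := hc hcol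
      exact ⟨z, hz.1, hr⟩
    · intro hncol hvS
      have hvT := hnc hncol
      have hvZ : v = Z := by
        by_contra hne
        exact hvT ⟨hvS, hne⟩
      subst hvZ
      exact hncol (hcon u w hinf)
  obtain ⟨u, w, hinf, hncol⟩ := hkey
  refine ⟨p, hp, hact, hinf.mem (by simp), ?_⟩
  intro u' w' hinf'
  obtain ⟨hu, hw⟩ := infix_triple_unique hp.1 hinf hinf'
  rwa [← hu, ← hw]
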